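/- Let m = 2^a·b be even with b odd, a ≥ 1. The number of matrices [[x,y],[0,z]] with xz = 2m, 0 ≤ y < z, gcd(x,y,z) = 1, and both x and z even, equals 2^a·ψ(b) − ψ(b). -/

import Mathlib

/-- The Dedekind psi function `ψ(n) = n · ∏_{p | n, p prime} (1 + 1/p)`. -/
def dedekindPsi (n : ℕ) : ℕ :=
  (n / n.primeFactors.prod id) * n.primeFactors.prod (fun p => p + 1)

open Finset

def gfun (x z : ℕ) : ℕ := (z / Nat.gcd x z) * Nat.totient (Nat.gcd x z)

def g2fun (x z : ℕ) : ℕ := if Even x ∧ Even z then gfun x z else 0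

theorem gfun_mul {a1 a2 b1 b2 : ℕ} (cop : Nat.Coprime (a1 * a2) (b1 * b2)) :
    gfun (a1 * b1) (a2 * b2) = gfun a1 a2 * gfun b1 b2 := by
  have key : ∀ x y, x ∣ a1 * a2 → y ∣ b1 * b2 → Nat.Coprime x y := fun x y hx hy =>
    Nat.Coprime.coprime_dvd_left hx (Nat.Coprime.coprime_dvd_right hy cop)
  have c22 : Nat.Coprime a2 b2 := key _ _ (dvd_mul_left _ _) (dvd_mul_left _ _)
  have c12 : Nat.Coprime b1 a2 := (key _ _ (dvd_mul_left _ _) (dvd_mul_right _ _)).symm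
  have c21 : Nat.Coprime a1 b2 := key _ _ (dvd_mul_right _ _) (dvd_mul_left _ _)
  have hgcd : Nat.gcd (a1 * b1) (a2 * b2) = Nat.gcd a1 a2 * Nat.gcd b1 b2 := by
    rw [Nat.Coprime.gcd_mul _ c22, Nat.Coprime.gcd_mul_right_cancel a1 c12,
      mul_comm a1 b1, Nat.Coprime.gcd_mul_right_cancel b1 c21]
  have d1z : Nat.gcd a1 a2 ∣ a2 := Nat.gcd_dvd_right _ _
  have d2z : Nat.gcd b1 b2 ∣ b2 := Nat.gcd_dvd_right _ _
  have cd : Nat.Coprime (Nat.gcd a1 a2) (Nat.gcd b1 b2) :=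
    Nat.Coprime.coprime_dvd_left d1z (Nat.Coprime.coprime_dvd_right d2z c22)
  unfold gfun
  rw [hgcd, Nat.totient_mul cd, ← Nat.div_mul_div_comm d1z d2z]
  ring

theorem sum_antidiag_mul {m n : ℕ} (cop : Nat.Coprime m n) (g g1 g2 : ℕ → ℕ → ℕ)
    (hg : ∀ a1 a2 b1 b2, a1 * a2 = m → b1 * b2 = n →
      g (a1 * b1) (a2 * b2) = g1 a1 a2 * g2 b1 b2) :
    ∑ p ∈ (m * n).divisorsAntidiagonal, g p.1 p.2 =
      (∑ p ∈ m.divisorsAntidiagonal, g1 p.1 p.2) *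
        (∑ p ∈ n.divisorsAntidiagonal, g2 p.1 p.2) := by
  rw [Finset.sum_mul_sum, ← Finset.sum_product']
  symm
  apply Finset.sum_nbij fun ((i, j), k, l) ↦ (i * k, j * l)
  · rintro ⟨⟨a1, a2⟩, ⟨b1, b2⟩⟩ h
    simp only [Finset.mem_product, Nat.mem_divisorsAntidiagonal, Ne] at h
    rcases h with ⟨⟨rfl, ha⟩, ⟨rfl, hb⟩⟩
    simp only [Nat.mem_divisorsAntidiagonal, Nat.mul_eq_zero, Ne]
    constructor
    · ring
    rw [Nat.mul_eq_zero] at *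
    exact not_or_intro ha hb
  · simp only [Set.InjOn, Finset.mem_coe, Nat.mem_divisorsAntidiagonal, Ne, Finset.mem_product,
      Prod.mk.injEq]
    rintro ⟨⟨a1, a2⟩, ⟨b1, b2⟩⟩ ⟨⟨rfl, ha⟩, ⟨rfl, hb⟩⟩ ⟨⟨c1, c2⟩, ⟨d1, d2⟩⟩ hcd h
    simp only [Prod.mk.injEq] at h
    ext <;> dsimp only
    · trans Nat.gcd (a1 * a2) (a1 * b1)
      · rw [Nat.gcd_mul_left, cop.coprime_mul_left.coprime_mul_right_right.gcd_eq_one, mul_one]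
      · rw [← hcd.1.1, ← hcd.2.1] at cop
        rw [← hcd.1.1, h.1, Nat.gcd_mul_left,
          cop.coprime_mul_left.coprime_mul_right_right.gcd_eq_one, mul_one]
    · trans Nat.gcd (a1 * a2) (a2 * b2)
      · rw [mul_comm, Nat.gcd_mul_left, cop.coprime_mul_right.coprime_mul_left_right.gcd_eq_one,
          mul_one]
      · rw [← hcd.1.1, ← hcd.2.1] at cop
        rw [← hcd.1.1, h.2, mul_comm, Nat.gcd_mul_left,
          cop.coprime_mul_right.coprime_mul_left_right.gcd_eq_one, mul_one]
    · trans Nat.gcd (b1 * b2) (a1 * b1)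
      · rw [mul_comm, Nat.gcd_mul_right,
          cop.coprime_mul_right.coprime_mul_left_right.symm.gcd_eq_one, one_mul]
      · rw [← hcd.1.1, ← hcd.2.1] at cop
        rw [← hcd.2.1, h.1, mul_comm c1 d1, Nat.gcd_mul_left,
          cop.coprime_mul_right.coprime_mul_left_right.symm.gcd_eq_one, mul_one]
    · trans Nat.gcd (b1 * b2) (a2 * b2)
      · rw [Nat.gcd_mul_right, cop.coprime_mul_left.coprime_mul_right_right.symm.gcd_eq_one,
          one_mul]
      · rw [← hcd.1.1, ← hcd.2.1] at cop
        rw [← hcd.2.1, h.2, Nat.gcd_mul_right,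
          cop.coprime_mul_left.coprime_mul_right_right.symm.gcd_eq_one, one_mul]
  · simp only [Set.SurjOn, Set.subset_def, Finset.mem_coe, Nat.mem_divisorsAntidiagonal, Ne,
      Finset.mem_product, Set.mem_image, exists_prop, Prod.mk.injEq]
    rintro ⟨b1, b2⟩ h
    dsimp at h
    use ((b1.gcd m, b2.gcd m), (b1.gcd n, b2.gcd n))
    rw [← cop.gcd_mul _, ← cop.gcd_mul _, ← h.1, Nat.gcd_mul_gcd_of_coprime_of_mul_eq_mul cop h.1,
      Nat.gcd_mul_gcd_of_coprime_of_mul_eq_mul cop.symm _]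
    · rw [Nat.mul_eq_zero, not_or] at h
      simp [h.2.1, h.2.2]
    rw [mul_comm n m, h.1]
  · simp only [Finset.mem_product, Nat.mem_divisorsAntidiagonal, Ne]
    rintro ⟨⟨a1, a2⟩, ⟨b1, b2⟩⟩ ⟨⟨rfl, ha⟩, ⟨rfl, hb⟩⟩
    dsimp only
    exact (hg a1 a2 b1 b2 rfl rfl).symm

def cS (n : ℕ) : ℕ := ∑ p ∈ n.divisorsAntidiagonal, gfun p.1 p.2

lemma gfun_one_left (z : ℕ) : gfun 1 z = z := by
  simp [gfun, Nat.gcd_one_left]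

lemma gfun_one_right (x : ℕ) : gfun x 1 = 1 := by
  simp [gfun, Nat.gcd_one_right]

lemma geom_aux (p : ℕ) (hp : 1 ≤ p) : ∀ K : ℕ, 1 + ∑ i ∈ Finset.range K, p ^ i * (p - 1) = p ^ K := by
  intro K
  induction K with
  | zero => simp
  | succ K ih =>
    rw [Finset.sum_range_succ, ← add_assoc, ih]
    have h : 1 + (p - 1) = p := by omega
    calc p ^ K + p ^ K * (p - 1) = p ^ K * (1 + (p - 1)) := by ring
      _ = p ^ (K + 1) := by rw [h, pow_succ]

lemma gfun_pow_middle {p : ℕ} (hp : p.Prime) {i k : ℕ} (h1 : 1 ≤ i) (h2 : i ≤ k) :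
    gfun (p ^ (k + 1 - i)) (p ^ i) = p ^ (i - 1) * (p - 1) := by
  obtain ⟨m, hm, hd⟩ := (Nat.dvd_prime_pow hp).mp (Nat.gcd_dvd_right (p ^ (k + 1 - i)) (p ^ i))
  have hpd : p ∣ p ^ m := by
    rw [← hd]
    exact Nat.dvd_gcd (dvd_pow_self p (by omega)) (dvd_pow_self p (by omega))
  have hm1 : 1 ≤ m := by
    rcases Nat.eq_zero_or_pos m with h | h
    · exfalso; rw [h, pow_zero] at hpd; exact hp.one_lt.ne' (Nat.eq_one_of_dvd_one hpd ▸ rfl)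
    · exact h
  unfold gfun
  rw [hd, Nat.pow_div hm hp.pos, Nat.totient_prime_pow hp (by omega)]
  rw [← mul_assoc, ← pow_add]
  congr 2
  omega

lemma cS_prime_pow {p : ℕ} (hp : p.Prime) (K : ℕ) :
    cS (p ^ (K + 1)) = p ^ (K + 1) + p ^ K := by
  unfold cS
  rw [Nat.sum_divisorsAntidiagonal' (f := fun x z => gfun x z), Nat.sum_divisors_prime_pow hp]
  have hterm : ∀ i ∈ Finset.range (K + 2), gfun (p ^ (K + 1) / p ^ i) (p ^ i) =
      if i = 0 then 1 else if i = K + 1 then p ^ (K + 1) else p ^ (i - 1) * (p - 1) := by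
    intro i hi
    rw [Finset.mem_range] at hi
    rcases Nat.eq_zero_or_pos i with rfl | hi1
    · simp [gfun_one_right]
    rcases eq_or_ne i (K + 1) with rfl | hik
    · rw [Nat.pow_div (le_refl _) hp.pos, Nat.sub_self, pow_zero, gfun_one_left]
      simp [Nat.lt_irrefl]  -- if-reduction
    · have h2 : i ≤ K := by omega
      rw [Nat.pow_div (by omega) hp.pos, gfun_pow_middle hp hi1 h2]
      simp [hi1.ne', hik]
  rw [Finset.sum_congr rfl hterm, Finset.sum_range_succ, Finset.sum_range_succ']
  have : ∀ i ∈ Finset.range K, (if i + 1 = 0 then 1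
      else if i + 1 = K + 1 then p ^ (K + 1) else p ^ (i + 1 - 1) * (p - 1)) = p ^ i * (p - 1) := by
    intro i hi
    rw [Finset.mem_range] at hi
    rw [if_neg (by omega), if_neg (by omega)]
    simp
  rw [Finset.sum_congr rfl this]
  simp only [reduceIte, if_pos rfl, if_neg (Nat.succ_ne_zero K)]
  have hg := geom_aux p hp.one_lt.le K
  omega

lemma dedekindPsi_prime_pow {p : ℕ} (hp : p.Prime) (K : ℕ) :
    dedekindPsi (p ^ (K + 1)) = p ^ (K + 1) + p ^ K := by
  unfold dedekindPsi
  rw [Nat.primeFactors_prime_pow (Nat.succ_ne_zero K) hp]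
  simp only [Finset.prod_singleton, id_eq]
  rw [pow_succ, Nat.mul_div_cancel _ hp.pos]
  ring

lemma dedekindPsi_mul {m n : ℕ} (hm : m ≠ 0) (hn : n ≠ 0) (cop : Nat.Coprime m n) :
    dedekindPsi (m * n) = dedekindPsi m * dedekindPsi n := by
  unfold dedekindPsi
  simp only [id_eq]
  have hdisj : Disjoint m.primeFactors n.primeFactors := Nat.Coprime.disjoint_primeFactors cop
  rw [Nat.primeFactors_mul hm hn, Finset.prod_union hdisj, Finset.prod_union hdisj,
    ← Nat.div_mul_div_comm (Nat.prod_primeFactors_dvd m) (Nat.prod_primeFactors_dvd n)]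
  ring

lemma cS_eq_dedekindPsi : ∀ n : ℕ, cS n = dedekindPsi n := by
  intro n
  induction n using Nat.recOnPosPrimePosCoprime with
  | prime_pow p k hp hk =>
    obtain ⟨K, rfl⟩ : ∃ K, k = K + 1 := ⟨k - 1, by omega⟩
    rw [cS_prime_pow hp, dedekindPsi_prime_pow hp]
  | zero => simp [cS, dedekindPsi]
  | one => simp [cS, dedekindPsi, Nat.divisorsAntidiagonal_one, gfun_one_left]
  | coprime a b ha hb cop iha ihb =>
    have : cS (a * b) = cS a * cS b := by
      unfold cS
      exact sum_antidiag_mul cop gfun gfun gfun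
        (fun a1 a2 b1 b2 h1 h2 => gfun_mul (h1 ▸ h2 ▸ cop))
    rw [this, iha, ihb, dedekindPsi_mul (by omega) (by omega) cop]

def cS2 (n : ℕ) : ℕ := ∑ p ∈ n.divisorsAntidiagonal, g2fun p.1 p.2

lemma cS2_split {a b : ℕ} (hb : Odd b) :
    cS2 (2 ^ (a + 1) * b) = cS2 (2 ^ (a + 1)) * cS b := by
  have cop : Nat.Coprime (2 ^ (a + 1)) b :=
    Nat.Coprime.pow_left _ (Nat.coprime_two_left.mpr hb)
  unfold cS2 cS
  apply sum_antidiag_mul cop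
  intro a1 a2 b1 b2 h1 h2
  have hb1 : Odd b1 := by
    rcases (Nat.odd_mul.mp (h2 ▸ hb)) with ⟨h, _⟩; exact h
  have hb2 : Odd b2 := by
    rcases (Nat.odd_mul.mp (h2 ▸ hb)) with ⟨_, h⟩; exact h
  have he1 : Even (a1 * b1) ↔ Even a1 := by
    rw [Nat.even_mul]; simp [Nat.not_even_iff_odd.mpr hb1]
  have he2 : Even (a2 * b2) ↔ Even a2 := by
    rw [Nat.even_mul]; simp [Nat.not_even_iff_odd.mpr hb2]
  unfold g2fun
  by_cases h : Even a1 ∧ Even a2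
  · rw [if_pos ⟨he1.mpr h.1, he2.mpr h.2⟩, if_pos h]
    exact gfun_mul (h1 ▸ h2 ▸ cop)
  · rw [if_neg (by rw [he1, he2]; exact h), if_neg h, zero_mul]

lemma cS2_two_pow (a : ℕ) : cS2 (2 ^ (a + 1)) = 2 ^ a - 1 := by
  unfold cS2
  rw [Nat.sum_divisorsAntidiagonal' (f := fun x z => g2fun x z),
    Nat.sum_divisors_prime_pow Nat.prime_two]
  have hterm : ∀ i ∈ Finset.range (a + 2), g2fun (2 ^ (a + 1) / 2 ^ i) (2 ^ i) =
      if i = 0 then 0 else if i = a + 1 then 0 else 2 ^ (i - 1) := by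
    intro i hi
    rw [Finset.mem_range] at hi
    rcases Nat.eq_zero_or_pos i with rfl | hi1
    · simp [g2fun]
    rcases eq_or_ne i (a + 1) with rfl | hik
    · rw [Nat.pow_div (le_refl _) Nat.prime_two.pos, Nat.sub_self, pow_zero]
      simp [g2fun]
    · have h2 : i ≤ a := by omega
      rw [Nat.pow_div (by omega) Nat.prime_two.pos]
      unfold g2fun
      rw [if_pos ⟨(Nat.even_pow).mpr ⟨even_two, by omega⟩, (Nat.even_pow).mpr ⟨even_two, by omega⟩⟩]
      have := gfun_pow_middle Nat.prime_two hi1 h2 (k := a)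
      rw [this]
      simp [hi1.ne', hik]
  rw [Finset.sum_congr rfl hterm, Finset.sum_range_succ, Finset.sum_range_succ']
  simp only [reduceIte, if_pos rfl, if_neg (Nat.succ_ne_zero a)]
  have : ∀ i ∈ Finset.range a, (if i + 1 = 0 then 0
      else if i + 1 = a + 1 then 0 else 2 ^ (i + 1 - 1)) = 2 ^ i := by
    intro i hi
    rw [Finset.mem_range] at hi
    rw [if_neg (by omega), if_neg (by omega)]
    simp
  rw [Finset.sum_congr rfl this]
  have hg := geom_aux 2 (by omega) a
  have goal_eq : (∑ i ∈ Finset.range a, 2 ^ i) = 2 ^ a - 1 := by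
    have h2 : ∑ i ∈ Finset.range a, 2 ^ i = ∑ i ∈ Finset.range a, 2 ^ i * (2 - 1) := by
      apply Finset.sum_congr rfl; intro i _; norm_num
    rw [h2]; omega
  exact goal_eq

lemma count_y (d q : ℕ) :
    ((Finset.range (d * q)).filter (fun y => Nat.Coprime d y)).card = q * d.totient := by
  induction q with
  | zero => simp
  | succ q ih =>
    have hsplit : Finset.range (d * (q + 1)) =
        Finset.range (d * q) ∪ Finset.Ico (d * q) (d * q + d) := by
      rw [Finset.range_eq_Ico, Finset.range_eq_Ico, Nat.mul_succ]
      rw [Finset.Ico_union_Ico_eq_Ico (by omega) (by omega)]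
    rw [hsplit, Finset.filter_union, Finset.card_union_of_disjoint, ih,
      Nat.filter_coprime_Ico_eq_totient d (d * q)]
    · ring
    · apply Finset.disjoint_filter_filter
      rw [Finset.range_eq_Ico]
      exact Finset.Ico_disjoint_Ico_consecutive _ _ _

lemma count_y' {x z : ℕ} (hz : z ≠ 0) (hxz : Nat.gcd x z ∣ z) :
    ((Finset.range z).filter (fun y => Nat.Coprime (Nat.gcd x z) y)).card = gfun x z := by
  have h := count_y (Nat.gcd x z) (z / Nat.gcd x z)
  rw [Nat.mul_div_cancel' hxz] at h
  rw [h, gfun, mul_comm]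

lemma gcd_rot (x y z : ℕ) : Nat.gcd (Nat.gcd x y) z = Nat.gcd (Nat.gcd x z) y := by
  rw [Nat.gcd_assoc, Nat.gcd_comm y z, ← Nat.gcd_assoc]

lemma nat_card_eq_filter_card {α : Type*} [DecidableEq α] (F : Finset α) (Q : α → Prop)
    [DecidablePred Q] (h : ∀ x, Q x → x ∈ F) :
    Nat.card {x // Q x} = (F.filter Q).card := by
  have e : {x // Q x} ≃ {x // x ∈ F.filter Q} :=
    ⟨fun t => ⟨t.1, Finset.mem_filter.mpr ⟨h t.1 t.2, t.2⟩⟩,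
     fun t => ⟨t.1, (Finset.mem_filter.mp t.2).2⟩,
     fun t => rfl, fun t => rfl⟩
  rw [Nat.card_congr e, Nat.card_eq_finsetCard]

def Q3 (n : ℕ) (t : ℕ × ℕ × ℕ) : Prop :=
  t.1 * t.2.2 = n ∧ t.2.1 < t.2.2 ∧ Nat.gcd (Nat.gcd t.1 t.2.1) t.2.2 = 1 ∧
    Even t.1 ∧ Even t.2.2

instance (n : ℕ) : DecidablePred (Q3 n) := fun t => by unfold Q3; infer_instance

lemma card_Q3 (n : ℕ) (hn : n ≠ 0) : Nat.card {t : ℕ × ℕ × ℕ // Q3 n t} = cS2 n := by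
  have hbound : ∀ t : ℕ × ℕ × ℕ, Q3 n t →
      t ∈ (Finset.range (n+1)) ×ˢ (Finset.range (n+1)) ×ˢ (Finset.range (n+1)) := by
    rintro ⟨x, y, z⟩ hQ
    obtain ⟨h1, h2, -⟩ := hQ
    change x * z = n at h1
    change y < z at h2
    have hxn := Nat.le_of_dvd (Nat.pos_of_ne_zero hn) ⟨_, h1.symm⟩
    have hzn := Nat.le_of_dvd (Nat.pos_of_ne_zero hn) (Dvd.intro_left _ h1)
    simp only [Finset.mem_product, Finset.mem_range]
    exact ⟨by omega, by omega, by omega⟩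
  rw [nat_card_eq_filter_card _ (Q3 n) hbound]
  rw [Finset.card_eq_sum_card_fiberwise
    (f := fun t : ℕ × ℕ × ℕ => (t.1, t.2.2)) (t := n.divisorsAntidiagonal) ?hf]
  case hf =>
    rintro ⟨x, y, z⟩ ht
    rw [Finset.mem_coe, Finset.mem_filter] at ht
    exact Nat.mem_divisorsAntidiagonal.mpr ⟨ht.2.1, hn⟩
  unfold cS2
  apply Finset.sum_congr rfl
  rintro ⟨x, z⟩ hp
  rw [Nat.mem_divisorsAntidiagonal] at hp
  replace hp : x * z = n := hp.1
  have hz0 : z ≠ 0 := by rintro rfl; exact hn (by simpa using hp.symm)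
  by_cases hpar : Even x ∧ Even z
  · rw [g2fun, if_pos hpar, ← count_y' hz0 (Nat.gcd_dvd_right x z)]
    refine Finset.card_bij' (fun t _ => t.2.1) (fun y _ => (x, y, z)) ?_ ?_ ?_ ?_
    · rintro ⟨x', y, z'⟩ ht
      simp only [Finset.mem_filter, Prod.mk.injEq] at ht
      obtain ⟨⟨-, hQ⟩, hx', hz'⟩ := ht
      subst hx'; subst hz'
      obtain ⟨-, h2, h3, -⟩ := hQ
      change y < z' at h2
      change Nat.gcd (Nat.gcd x' y) z' = 1 at h3
      simp only [Finset.mem_filter, Finset.mem_range]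
      exact ⟨h2, by rw [Nat.Coprime, ← gcd_rot, h3]⟩
    · intro y hy
      simp only [Finset.mem_filter, Finset.mem_range] at hy
      have hQ : Q3 n (x, y, z) :=
        ⟨hp, hy.1, by rw [gcd_rot]; exact hy.2, hpar.1, hpar.2⟩
      exact Finset.mem_filter.mpr ⟨Finset.mem_filter.mpr ⟨hbound _ hQ, hQ⟩, rfl⟩
    · rintro ⟨x', y, z'⟩ ht
      simp only [Finset.mem_filter, Prod.mk.injEq] at ht
      obtain ⟨-, hx', hz'⟩ := ht
      simp [hx', hz']
    · intro y hy; rfl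
  · rw [g2fun, if_neg hpar]
    rw [Finset.card_eq_zero, Finset.filter_eq_empty_iff]
    rintro ⟨x', y, z'⟩ ht
    simp only [Finset.mem_filter] at ht
    simp only [Prod.mk.injEq]
    rintro ⟨hx', hz'⟩
    subst hx'; subst hz'
    exact hpar ⟨ht.2.2.2.2.1, ht.2.2.2.2.2⟩

lemma int_gcd_eq (x y z : ℤ) :
    Int.gcd (↑(Int.gcd x y)) z = Nat.gcd (Nat.gcd x.natAbs y.natAbs) z.natAbs := by
  rw [Int.gcd_def, Int.natAbs_natCast, Int.gcd_def]

lemma e00 (x y z w : ℤ) : !![x, y; z, w] 0 0 = x := by simp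
lemma e01 (x y z w : ℤ) : !![x, y; z, w] 0 1 = y := by simp
lemma e10 (x y z w : ℤ) : !![x, y; z, w] 1 0 = z := by simp
lemma e11 (x y z w : ℤ) : !![x, y; z, w] 1 1 = w := by simp

def matEquiv (m : ℕ) (hm : 0 < m) :
    {M : Matrix (Fin 2) (Fin 2) ℤ //
        M 1 0 = 0 ∧ M 0 0 * M 1 1 = (2 * m : ℤ) ∧ 0 ≤ M 0 1 ∧ M 0 1 < M 1 1 ∧
        Int.gcd (Int.gcd (M 0 0) (M 0 1)) (M 1 1) = 1 ∧ Even (M 0 0) ∧ Even (M 1 1)} ≃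
      {t : ℕ × ℕ × ℕ // Q3 (2 * m) t} where
  toFun := fun ⟨M, h⟩ => ⟨((M 0 0).natAbs, (M 0 1).natAbs, (M 1 1).natAbs), by
    obtain ⟨h0, hprod, hy0, hylt, hgcd, hex, hez⟩ := h
    refine ⟨?_, ?_, ?_, ?_, ?_⟩
    · show (M 0 0).natAbs * (M 1 1).natAbs = 2 * m
      rw [← Int.natAbs_mul, hprod]
      rw [show (2 * (m:ℤ)) = ((2 * m : ℕ) : ℤ) by push_cast; ring, Int.natAbs_natCast]
    · change (M 0 1).natAbs < (M 1 1).natAbs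
      omega
    · change Nat.gcd (Nat.gcd _ _) _ = 1
      rw [← int_gcd_eq]
      exact hgcd
    · exact Int.natAbs_even.mpr hex
    · exact Int.natAbs_even.mpr hez⟩
  invFun := fun ⟨⟨x, y, z⟩, h⟩ => ⟨!![(x:ℤ), (y:ℤ); 0, (z:ℤ)], by
    obtain ⟨h1, h2, h3, h4, h5⟩ := h
    change x * z = 2 * m at h1
    change y < z at h2
    change Nat.gcd (Nat.gcd x y) z = 1 at h3
    change Even x at h4
    change Even z at h5
    rw [e00, e01, e10, e11]
    refine ⟨rfl, ?_, ?_, ?_, ?_, ?_, ?_⟩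
    · exact_mod_cast congrArg (fun k : ℕ => (k : ℤ)) h1
    · positivity
    · exact_mod_cast h2
    · rw [int_gcd_eq]
      simpa using h3
    · exact_mod_cast h4
    · exact_mod_cast h5⟩
  left_inv := fun ⟨M, h⟩ => by
    obtain ⟨h0, hprod, hy0, hylt, hgcd, hex, hez⟩ := h
    have h2m : (0:ℤ) < 2 * m := by positivity
    have hz0 : 0 < M 1 1 := lt_of_le_of_lt hy0 hylt
    have hx0 : 0 < M 0 0 := by nlinarith
    apply Subtype.ext
    dsimp only
    have ex : (((M 0 0).natAbs : ℤ)) = M 0 0 := Int.natAbs_of_nonneg hx0.le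
    have ey : (((M 0 1).natAbs : ℤ)) = M 0 1 := Int.natAbs_of_nonneg hy0
    have ez : (((M 1 1).natAbs : ℤ)) = M 1 1 := Int.natAbs_of_nonneg hz0.le
    rw [ex, ey, ez]
    conv_rhs => rw [Matrix.eta_fin_two M]
    rw [h0]
  right_inv := fun ⟨⟨x, y, z⟩, h⟩ => by
    apply Subtype.ext
    dsimp only
    rw [e00, e01, e11]
    simp [Int.natAbs_natCast]

/-- For `m = 2^a·b` even with `b` odd and `a ≥ 1`, the number of matrices
`[[x,y],[0,z]]` with `xz = 2m`, `0 ≤ y < z`, `gcd(x,y,z) = 1`, and `x`, `z` both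
even, equals `2^a·ψ(b) − ψ(b)`. -/
theorem count_S2_eq (m a b : ℕ) (ha : 1 ≤ a) (hb : Odd b) (hm : m = 2 ^ a * b) :
    (Nat.card {M : Matrix (Fin 2) (Fin 2) ℤ //
        M 1 0 = 0 ∧ M 0 0 * M 1 1 = (2 * m : ℤ) ∧ 0 ≤ M 0 1 ∧ M 0 1 < M 1 1 ∧
        Int.gcd (Int.gcd (M 0 0) (M 0 1)) (M 1 1) = 1 ∧ Even (M 0 0) ∧ Even (M 1 1)} : ℤ)
      = 2 ^ a * dedekindPsi b - dedekindPsi b := by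
  have hb0 : 0 < b := by
    rcases hb with ⟨k, rfl⟩; omega
  have hm0 : 0 < m := by
    subst hm; positivity
  rw [Nat.card_congr (matEquiv m hm0), card_Q3 (2 * m) (by omega)]
  have h2m : 2 * m = 2 ^ (a + 1) * b := by rw [hm]; ring
  obtain ⟨a', rfl⟩ : ∃ a', a = a' + 1 := ⟨a - 1, by omega⟩
  rw [h2m, cS2_split hb]
  have hsp : a' + 1 + 1 = (a' + 1) + 1 := rfl
  rw [cS2_two_pow (a' + 1), cS_eq_dedekindPsi b]
  have h1 : (1:ℕ) ≤ 2 ^ (a' + 1) := Nat.one_le_two_pow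
  rw [Nat.cast_mul, Nat.cast_sub h1]
  push_cast
  ring
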